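/- Let a, b be positive integers and let n₀ ≥ 2 be a positive integer such that every set A of permutations of {1,…,n₀} with |A| ≤ a satisfies d_2(A) ≥ b − 1. Then for every integer p ≥ 2, setting m_p = n₀ + (2⌈n₀/a⌉ − 1)(p − 2), every set A of permutations of {1,…,m_p} with |A| ≤ a + 2(p − 2) satisfies d_p(A) ≥ b − 1. -/

import Mathlib

/-- `σ(≤P) = {s : σ s ≤ max_{j ∈ P} σ j}`. -/
def permLe {n : ℕ} (σ : Equiv.Perm (Fin n)) (P : Finset (Fin n)) : Finset (Fin n) :=
  Finset.univ.filter fun s => ∃ j ∈ P, σ s ≤ σ j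

/-- The `P`-dependent set `⟨A;P⟩ = ⋂_{σ ∈ A} σ(≤P)`. -/
def depSet {n : ℕ} (A : Finset (Equiv.Perm (Fin n))) (P : Finset (Fin n)) : Finset (Fin n) :=
  Finset.univ.filter fun s => ∀ σ ∈ A, ∃ j ∈ P, σ s ≤ σ j

/-- The `P`-dependency `d(A;P) = |⟨A;P⟩| - |P|`. -/
def dep {n : ℕ} (A : Finset (Equiv.Perm (Fin n))) (P : Finset (Fin n)) : ℕ :=
  (depSet A P).card - P.card

/-- The `p`-tuple dependency `d_p(A) = max {d(A;P) : |P| = p}`. -/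
def tupleDep {n : ℕ} (A : Finset (Equiv.Perm (Fin n))) (p : ℕ) : ℕ :=
  (Finset.powersetCard p (Finset.univ : Finset (Fin n))).sup (dep A)

lemma mem_depSet {n : ℕ} {A : Finset (Equiv.Perm (Fin n))} {P : Finset (Fin n)} {s : Fin n} :
    s ∈ depSet A P ↔ ∀ σ ∈ A, ∃ j ∈ P, σ s ≤ σ j := by
  simp [depSet]

lemma subset_depSet {n : ℕ} (A : Finset (Equiv.Perm (Fin n))) (P : Finset (Fin n)) :
    P ⊆ depSet A P := fun s hs => mem_depSet.2 fun σ _ => ⟨s, hs, le_rfl⟩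

/-- Standardization: any injection `g : Fin M → Fin N` induces a permutation of `Fin M`
with the same order pattern. -/
lemma std_exists {M N : ℕ} (g : Fin M → Fin N) (hg : Function.Injective g) :
    ∃ τ : Equiv.Perm (Fin M), ∀ i j, (τ i ≤ τ j ↔ g i ≤ g j) := by
  classical
  set s := Finset.univ.image g with hs_def
  have hs : s.card = M := by
    rw [hs_def, Finset.card_image_of_injective _ hg, Finset.card_univ, Fintype.card_fin]
  let iso := s.orderIsoOfFin hs
  let f : Fin M → Fin M := fun i => iso.symm ⟨g i, by
    rw [hs_def]; exact Finset.mem_image_of_mem g (Finset.mem_univ i)⟩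
  have hf : Function.Injective f := by
    intro i j h
    have h2 := iso.symm.injective h
    exact hg (congrArg Subtype.val h2)
  refine ⟨Equiv.ofBijective f (Finite.injective_iff_bijective.mp hf), fun i j => ?_⟩
  show f i ≤ f j ↔ _
  rw [iso.symm.le_iff_le]
  exact Subtype.mk_le_mk

/-- Lifting lemma: from a good `P'` on the restricted instance, build a good `P` upstairs. -/
lemma lift_lemma {N M k p d : ℕ}
    (ih : ∀ A' : Finset (Equiv.Perm (Fin M)), A'.card ≤ k →
      ∃ P' : Finset (Fin M), P'.card = p ∧ p + d ≤ (depSet A' P').card)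
    (A R : Finset (Equiv.Perm (Fin N))) (hR : (A \ R).card ≤ k)
    (D : Finset (Fin N)) (hD : Dᶜ.card = M) (x : Fin N) (hx : x ∈ D)
    (cover : ∀ σ ∈ R, ∀ s : Fin N, s ∉ D → σ s ≤ σ x) :
    ∃ P : Finset (Fin N), P.card = p + 1 ∧ (p + 1) + d ≤ (depSet A P).card := by
  classical
  let iso := Dᶜ.orderIsoOfFin hD
  let e : Fin M → Fin N := fun i => (iso i : Fin N)
  have he : Function.Injective e := by
    intro i j h
    exact iso.injective (Subtype.ext h)
  have heD : ∀ i, e i ∉ D := by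
    intro i
    have h2 := (iso i).2
    exact (Finset.mem_compl).1 h2
  choose τ hτ using fun σ : Equiv.Perm (Fin N) =>
    std_exists (fun i => σ (e i)) (σ.injective.comp he)
  obtain ⟨P', hP'c, hP'd⟩ := ih ((A \ R).image τ) (le_trans Finset.card_image_le hR)
  have hxe : ∀ (S : Finset (Fin M)), x ∉ S.image e := by
    intro S hmem
    obtain ⟨i, -, hi⟩ := Finset.mem_image.1 hmem
    exact heD i (hi ▸ hx)
  refine ⟨insert x (P'.image e), ?_, ?_⟩
  · rw [Finset.card_insert_of_notMem (hxe P'), Finset.card_image_of_injective _ he, hP'c]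
  · have hsub : insert x ((depSet ((A \ R).image τ) P').image e)
        ⊆ depSet A (insert x (P'.image e)) := by
      intro s hs
      rcases Finset.mem_insert.1 hs with rfl | hs
      · exact subset_depSet _ _ (Finset.mem_insert_self _ _)
      · obtain ⟨s', hs', rfl⟩ := Finset.mem_image.1 hs
        rw [mem_depSet] at hs'
        rw [mem_depSet]
        intro σ hσ
        by_cases hσR : σ ∈ R
        · exact ⟨x, Finset.mem_insert_self _ _, cover σ hσR _ (heD s')⟩
        · obtain ⟨j', hj', hle⟩ := hs' (τ σ)
            (Finset.mem_image_of_mem τ (Finset.mem_sdiff.2 ⟨hσ, hσR⟩))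
          exact ⟨e j', Finset.mem_insert_of_mem (Finset.mem_image_of_mem e hj'),
            (hτ σ s' j').1 hle⟩
    have hcard := Finset.card_le_card hsub
    rw [Finset.card_insert_of_notMem (hxe _), Finset.card_image_of_injective _ he] at hcard
    omega

/-- The set of positions where `σ` takes one of the top `q` values. -/
def topSet {N : ℕ} (q : ℕ) (σ : Equiv.Perm (Fin N)) : Finset (Fin N) :=
  Finset.univ.filter fun s => N - q ≤ (σ s : ℕ)

lemma topSet_card {N q : ℕ} (hq : q ≤ N) (σ : Equiv.Perm (Fin N)) : (topSet q σ).card = q := by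
  classical
  have h1 : topSet q σ =
      (Finset.univ.filter fun v : Fin N => N - q ≤ (v : ℕ)).image σ.symm := by
    ext s
    simp only [topSet, Finset.mem_filter, Finset.mem_univ, true_and, Finset.mem_image]
    constructor
    · intro h; exact ⟨σ s, h, by simp⟩
    · rintro ⟨v, hv, rfl⟩; simpa using hv
  have h2 : (Finset.univ.filter fun v : Fin N => N - q ≤ (v : ℕ)) =
      (Finset.Ico (N - q) N).attachFin (fun m hm => (Finset.mem_Ico.1 hm).2) := by
    ext v
    simp [Finset.mem_attachFin, Finset.mem_Ico, v.isLt]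
  rw [h1, Finset.card_image_of_injective _ σ.symm.injective, h2, Finset.card_attachFin,
    Nat.card_Ico]
  omega

lemma mem_topSet {N q : ℕ} {σ : Equiv.Perm (Fin N)} {s : Fin N} :
    s ∈ topSet q σ ↔ N - q ≤ (σ s : ℕ) := by
  simp [topSet]

/-- The induction step. -/
lemma step_lemma {M q p k d N : ℕ} (hq : 1 ≤ q) (hNdef : N = M + (2 * q - 1))
    (hpg : N < q * (k + 2))
    (ih : ∀ A' : Finset (Equiv.Perm (Fin M)), A'.card ≤ k →
      ∃ P' : Finset (Fin M), P'.card = p ∧ p + d ≤ (depSet A' P').card) :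
    ∀ A : Finset (Equiv.Perm (Fin N)), A.card ≤ k + 2 →
      ∃ P : Finset (Fin N), P.card = p + 1 ∧ (p + 1) + d ≤ (depSet A P).card := by
  classical
  intro A hA
  have hqN : q ≤ N := by omega
  have hcN : 2 * q - 1 ≤ N := by omega
  have hcard_univ : (Finset.univ : Finset (Fin N)).card = N := by simp
  have hNuniv : Fintype.card (Fin N) = N := Fintype.card_fin N
  have hDc_of : ∀ D : Finset (Fin N), D.card = 2 * q - 1 → Dᶜ.card = M := by
    intro D hDc
    rw [Finset.card_compl, hDc, Fintype.card_fin]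
    omega
  by_cases hsmall : A.card ≤ k
  · -- no permutation needs to be removed
    have hN1 : 0 < N := by omega
    obtain ⟨D, hxD, hDcard⟩ := Finset.exists_superset_card_eq
      (s := {(⟨0, hN1⟩ : Fin N)}) (n := 2 * q - 1)
      (by rw [Finset.card_singleton]; omega) (by rw [Fintype.card_fin]; omega)
    exact lift_lemma ih A ∅ (by simpa using hsmall) D (hDc_of D hDcard) _
      (hxD (Finset.mem_singleton_self _)) (by simp)
  · by_cases hpair : ∃ σ1 ∈ A, ∃ σ2 ∈ A, σ1 ≠ σ2 ∧ (topSet q σ1 ∩ topSet q σ2).Nonempty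
    · -- two permutations with intersecting top sets: remove both
      obtain ⟨σ1, h1, σ2, h2, hne, x, hxmem⟩ := hpair
      have hx1 : x ∈ topSet q σ1 := (Finset.mem_inter.1 hxmem).1
      have hx2 : x ∈ topSet q σ2 := (Finset.mem_inter.1 hxmem).2
      have hU : (topSet q σ1 ∪ topSet q σ2).card ≤ 2 * q - 1 := by
        have hui := Finset.card_union_add_card_inter (topSet q σ1) (topSet q σ2)
        have h1c := topSet_card hqN σ1
        have h2c := topSet_card hqN σ2
        have hi : 1 ≤ (topSet q σ1 ∩ topSet q σ2).card :=
          Finset.card_pos.2 ⟨x, hxmem⟩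
        omega
      obtain ⟨D, hsub, hDcard⟩ := Finset.exists_superset_card_eq hU
        (by rw [Fintype.card_fin]; omega)
      refine lift_lemma ih A {σ1, σ2} ?_ D (hDc_of D hDcard) x
        (hsub (Finset.mem_union_left _ hx1)) ?_
      · have hss : ({σ1, σ2} : Finset (Equiv.Perm (Fin N))) ⊆ A := by
          intro t ht
          rcases Finset.mem_insert.1 ht with rfl | ht
          · exact h1
          · rw [Finset.mem_singleton.1 ht]; exact h2
        rw [Finset.card_sdiff_of_subset hss, Finset.card_pair hne]
        omega
      · intro σ hσ s hs
        rcases Finset.mem_insert.1 hσ with rfl | hσ'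
        · have hsT : s ∉ topSet q σ := fun h => hs (hsub (Finset.mem_union_left _ h))
          have hxv : N - q ≤ (σ x : ℕ) := mem_topSet.1 hx1
          have hsv : ¬ (N - q ≤ (σ s : ℕ)) := fun h => hsT (mem_topSet.2 h)
          exact Fin.le_def.2 (by omega)
        · rw [Finset.mem_singleton.1 hσ']
          have hsT : s ∉ topSet q σ2 := fun h => hs (hsub (Finset.mem_union_right _ h))
          have hxv : N - q ≤ (σ2 x : ℕ) := mem_topSet.1 hx2
          have hsv : ¬ (N - q ≤ (σ2 s : ℕ)) := fun h => hsT (mem_topSet.2 h)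
          exact Fin.le_def.2 (by omega)
    · -- all top sets pairwise disjoint: few permutations, remove one
      push_neg at hpair
      have hdisj : (A : Set (Equiv.Perm (Fin N))).PairwiseDisjoint (topSet q) := by
        intro σ1 h1 σ2 h2 hne
        have := hpair σ1 h1 σ2 h2 hne
        exact Finset.disjoint_iff_inter_eq_empty.2 this
      have hbU : (A.biUnion (topSet q)).card = A.card * q := by
        rw [Finset.card_biUnion (fun σ1 h1 σ2 h2 hne => hdisj h1 h2 hne)]
        rw [Finset.sum_congr rfl (fun σ _ => topSet_card hqN σ), Finset.sum_const,
          smul_eq_mul]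
      have hle : A.card * q ≤ N := by
        have h9 := Finset.card_le_univ (A.biUnion (topSet q))
        rw [hbU, hNuniv] at h9
        exact h9
      have hAcard : A.card ≤ k + 1 := by
        by_contra hc
        have h3 : k + 2 ≤ A.card := by omega
        have h4 : (k + 2) * q ≤ A.card * q := Nat.mul_le_mul_right q h3
        have h5 : q * (k + 2) ≤ N := le_trans (le_of_eq (Nat.mul_comm _ _)) (le_trans h4 hle)
        exact absurd hpg (not_lt.2 h5)
      have hAne : A.Nonempty := Finset.card_pos.1 (by omega)
      obtain ⟨σ1, hσ1⟩ := hAne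
      have hN1 : 0 < N := by omega
      set x := σ1.symm ⟨N - 1, by omega⟩ with hxdef
      have hσ1x : (σ1 x : ℕ) = N - 1 := by
        rw [hxdef, Equiv.apply_symm_apply]
      have hxT : x ∈ topSet q σ1 := mem_topSet.2 (by omega)
      have hTc : (topSet q σ1).card ≤ 2 * q - 1 := by
        rw [topSet_card hqN]; omega
      obtain ⟨D, hsub, hDcard⟩ := Finset.exists_superset_card_eq hTc
        (by rw [Fintype.card_fin]; omega)
      refine lift_lemma ih A {σ1} ?_ D (hDc_of D hDcard) x (hsub hxT) ?_
      · rw [Finset.card_sdiff_of_subset (Finset.singleton_subset_iff.2 hσ1),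
          Finset.card_singleton]
        omega
      · intro σ hσ s hs
        rw [Finset.mem_singleton.1 hσ]
        have hsT : s ∉ topSet q σ1 := fun h => hs (hsub h)
        have hsv : ¬ (N - q ≤ (σ1 s : ℕ)) := fun h => hsT (mem_topSet.2 h)
        exact Fin.le_def.2 (by omega)

theorem dependency_linear_growth (a b n₀ : ℕ) (ha : 0 < a) (hb : 0 < b) (hn₀ : 2 ≤ n₀)
    (H : ∀ A : Finset (Equiv.Perm (Fin n₀)), A.card ≤ a → b - 1 ≤ tupleDep A 2) :
    ∀ p : ℕ, 2 ≤ p →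
      ∀ A : Finset (Equiv.Perm (Fin (n₀ + (2 * ((n₀ + a - 1) / a) - 1) * (p - 2)))),
        A.card ≤ a + 2 * (p - 2) → b - 1 ≤ tupleDep A p := by
  intro p hp
  rcases Nat.lt_or_ge b 2 with hb1 | hb2
  · intro A hA
    have hb0 : b - 1 = 0 := by omega
    rw [hb0]
    exact Nat.zero_le _
  set q := (n₀ + a - 1) / a with hqdef
  have hqa : n₀ ≤ a * q := by
    have h := Nat.div_add_mod (n₀ + a - 1) a
    have h2 : (n₀ + a - 1) % a < a := Nat.mod_lt _ ha
    rw [← hqdef] at h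
    set X := a * q with hX
    omega
  have hq : 1 ≤ q := by
    rcases Nat.eq_zero_or_pos q with h0 | h1
    · rw [h0, Nat.mul_zero] at hqa; omega
    · exact h1
  clear_value q
  -- key induction
  have key : ∀ t : ℕ, ∀ A : Finset (Equiv.Perm (Fin (n₀ + (2 * q - 1) * t))),
      A.card ≤ a + 2 * t →
      ∃ P : Finset (Fin (n₀ + (2 * q - 1) * t)), P.card = t + 2 ∧
        (t + 2) + (b - 1) ≤ (depSet A P).card := by
    intro t
    induction t with
    | zero =>
      simp only [Nat.mul_zero, Nat.add_zero]
      intro A hA0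
      have h := H A (by omega)
      rw [tupleDep] at h
      have hpos : (0 : ℕ) < b - 1 := by omega
      obtain ⟨P, hPmem, hPle⟩ := (Finset.le_sup_iff hpos).1 h
      have hPcard : P.card = 2 := Finset.mem_powersetCard_univ.1 hPmem
      refine ⟨P, hPcard, ?_⟩
      have hsub := Finset.card_le_card (subset_depSet A P)
      have hdep : dep A P = (depSet A P).card - 2 := by rw [dep, hPcard]
      omega
    | succ t iht =>
      have harith : n₀ + (2 * q - 1) * (t + 1) = (n₀ + (2 * q - 1) * t) + (2 * q - 1) := by
        ring
      rw [harith]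
      intro A hA1
      have hpg : (n₀ + (2 * q - 1) * t) + (2 * q - 1) < q * ((a + 2 * t) + 2) := by
        obtain ⟨q', rfl⟩ : ∃ q', q = q' + 1 := ⟨q - 1, by omega⟩
        have h1 : 2 * (q' + 1) - 1 = 2 * q' + 1 := by omega
        rw [h1]
        nlinarith [hqa]
      obtain ⟨P, hPc, hPd⟩ := step_lemma hq rfl hpg iht A (by omega)
      exact ⟨P, by omega, by omega⟩
  intro A hA
  obtain ⟨P, hPc, hPd⟩ := key (p - 2) A hA
  have hp2 : p - 2 + 2 = p := by omega
  have hmem : P ∈ Finset.powersetCard p (Finset.univ : Finset _) :=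
    Finset.mem_powersetCard_univ.2 (by omega)
  have hle := Finset.le_sup (f := dep A) hmem
  have hdep : b - 1 ≤ dep A P := by
    rw [dep]
    omega
  exact le_trans hdep hle
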